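/- Let G = G₁G₂ be a product of proper subgroups G₁, G₂ with N = G₁ ∩ G₂, and let Xᵢ ⊆ Gᵢ (i=1,2) be semiregular RDSs with common forbidden subgroup N, |N| = n, and parameters (nλᵢ, n, nλᵢ, λᵢ). If X₁ is i-commuting, then X₁X₂ is a semiregular RDS in G with forbidden subgroup N and parameters (n²λ₁λ₂, n, n²λ₁λ₂, nλ₁λ₂). -/

import Mathlib

open Finset MonoidAlgebra Pointwise

/-- The element of the integral group ring `ℤG` given by the sum of the elements of `X`. -/
noncomputable def gsum {G : Type*} [Group G] (X : Finset G) : MonoidAlgebra ℤ G :=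
  ∑ x ∈ X, MonoidAlgebra.single x (1 : ℤ)

section helpers

variable {G : Type*} [Group G] [DecidableEq G]

set_option linter.unusedSectionVars false

lemma gsum_apply (X : Finset G) (g : G) : (gsum X).coeff g = if g ∈ X then 1 else 0 := by
  classical
  rw [gsum, MonoidAlgebra.coeff_sum, Finsupp.finset_sum_apply]
  simp only [MonoidAlgebra.coeff_single, Finsupp.single_apply]
  exact Finset.sum_ite_eq' X g (fun _ => (1:ℤ))

lemma gsum_mul (X Y : Finset G) :
    gsum X * gsum Y = ∑ p ∈ X ×ˢ Y, MonoidAlgebra.single (p.1 * p.2) (1:ℤ) := by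
  rw [Finset.sum_product, gsum, gsum, Finset.sum_mul]
  exact Finset.sum_congr rfl fun x _ => by
    rw [Finset.mul_sum]
    exact Finset.sum_congr rfl fun y _ => by
      rw [MonoidAlgebra.single_mul_single, one_mul]

lemma gsum_mul_apply (X Y : Finset G) (g : G) :
    (gsum X * gsum Y).coeff g = ∑ p ∈ X ×ˢ Y, (if p.1 * p.2 = g then (1:ℤ) else 0) := by
  rw [gsum_mul, MonoidAlgebra.coeff_sum, Finsupp.finset_sum_apply]
  simp only [MonoidAlgebra.coeff_single, Finsupp.single_apply]

lemma no_rep {X Y : Finset G} {C : MonoidAlgebra ℤ G} (h : gsum X * gsum Y = C)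
    {g : G} (hg : C.coeff g = 0) {x y : G} (hx : x ∈ X) (hy : y ∈ Y) : x * y ≠ g := by
  intro he
  have h1 : (1:ℤ) ≤ (gsum X * gsum Y).coeff g := by
    rw [gsum_mul_apply]
    have := Finset.single_le_sum (f := fun p : G × G => if p.1 * p.2 = g then (1:ℤ) else 0)
      (fun i _ => by positivity)
      (show (x, y) ∈ X ×ˢ Y from Finset.mem_product.mpr ⟨hx, hy⟩)
    simpa [he] using this
  rw [h, hg] at h1; norm_num at h1

lemma gsum_of_image_eq {X Y : Finset G} (Z : Finset G)
    (hinj : ∀ x ∈ X, ∀ x' ∈ X, ∀ y ∈ Y, ∀ y' ∈ Y, x * y = x' * y' → x = x' ∧ y = y')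
    (him : X * Y = Z) : gsum X * gsum Y = gsum Z := by
  rw [gsum_mul, ← him, Finset.mul_def, gsum, Finset.sum_image]
  intro p hp q hq hpq
  rw [Finset.mem_coe, Finset.mem_product] at hp hq
  have := hinj p.1 hp.1 q.1 hq.1 p.2 hp.2 q.2 hq.2 hpq
  exact Prod.ext this.1 this.2

lemma gsum_mul_single (S : Finset G) (a : G) :
    gsum S * MonoidAlgebra.single a (1:ℤ) = gsum (S.image (· * a)) := by
  simp only [gsum]
  rw [Finset.sum_image (fun x _ y _ h => mul_right_cancel h), Finset.sum_mul]
  exact Finset.sum_congr rfl fun x _ => by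
    rw [MonoidAlgebra.single_mul_single, one_mul]

lemma gsum_univ_mul_single [Fintype G] (a : G) :
    gsum (Finset.univ : Finset G) * MonoidAlgebra.single a (1:ℤ) = gsum Finset.univ := by
  rw [gsum_mul_single]
  rw [Finset.eq_univ_of_forall
    (fun g => Finset.mem_image.mpr ⟨g * a⁻¹, Finset.mem_univ _, by simp⟩)]

lemma gsum_filter_mul_single [Fintype G] (H : Subgroup G) [DecidablePred (· ∈ H)]
    {a : G} (ha : a ∈ H) :
    gsum (Finset.univ.filter (· ∈ H)) * MonoidAlgebra.single a (1:ℤ)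
      = gsum (Finset.univ.filter (· ∈ H)) := by
  rw [gsum_mul_single]
  congr 1
  ext g
  simp only [Finset.mem_image, Finset.mem_filter, Finset.mem_univ, true_and]
  constructor
  · rintro ⟨x, hx, rfl⟩; exact H.mul_mem hx ha
  · intro hg; exact ⟨g * a⁻¹, H.mul_mem hg (H.inv_mem ha), by simp⟩

lemma gsum_univ_mul [Fintype G] (T : Finset G) :
    gsum (Finset.univ : Finset G) * gsum T = T.card • gsum (Finset.univ : Finset G) := by
  conv_lhs => rw [show gsum T = ∑ a ∈ T, MonoidAlgebra.single a (1:ℤ) from rfl]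
  rw [Finset.mul_sum, Finset.sum_congr rfl (fun a _ => gsum_univ_mul_single a),
    Finset.sum_const]

lemma gsum_filter_mul [Fintype G] (H : Subgroup G) [DecidablePred (· ∈ H)]
    {T : Finset G} (hT : ∀ a ∈ T, a ∈ H) :
    gsum (Finset.univ.filter (· ∈ H)) * gsum T
      = T.card • gsum (Finset.univ.filter (· ∈ H)) := by
  conv_lhs => rw [show gsum T = ∑ a ∈ T, MonoidAlgebra.single a (1:ℤ) from rfl]
  rw [Finset.mul_sum, Finset.sum_congr rfl (fun a ha => gsum_filter_mul_single H (hT a ha)),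
    Finset.sum_const]

end helpers

/-- Product construction: if `G = G₁G₂` with `N = G₁ ∩ G₂`, `Xᵢ ⊆ Gᵢ` are semiregular RDSs
with common forbidden subgroup `N`, `|N| = n`, parameters `(nλᵢ, n, nλᵢ, λᵢ)`, and `X₁` is
i-commuting, then `X₁X₂` is a semiregular RDS in `G` with forbidden subgroup `N` and
parameters `(n²λ₁λ₂, n, n²λ₁λ₂, nλ₁λ₂)`. -/
theorem stmt5 {G : Type*} [Group G] [Fintype G] [DecidableEq G]
    (G1 G2 : Subgroup G) [DecidablePred (· ∈ G1)] [DecidablePred (· ∈ G2)]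
    (hG1 : G1 ≠ ⊤) (hG2 : G2 ≠ ⊤)
    (hprod : ∀ g : G, ∃ g1 ∈ G1, ∃ g2 ∈ G2, g = g1 * g2)
    (N : Subgroup G) [DecidablePred (· ∈ N)] (hN : N = G1 ⊓ G2)
    (n l1 l2 : ℕ) (hn : Nat.card N = n) (hl1 : 0 < l1) (hl2 : 0 < l2)
    (X1 X2 : Finset G) (hX1sub : ∀ x ∈ X1, x ∈ G1) (hX2sub : ∀ x ∈ X2, x ∈ G2)
    (hX1card : X1.card = n * l1) (hX2card : X2.card = n * l2)
    (hX1semi : X1.card = Nat.card (G1 ⧸ N.subgroupOf G1))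
    (hX2semi : X2.card = Nat.card (G2 ⧸ N.subgroupOf G2))
    (hX1 : gsum X1 * gsum (X1.image (·⁻¹)) =
      (n * l1) • (1 : MonoidAlgebra ℤ G) +
      l1 • (gsum (Finset.univ.filter (· ∈ G1)) - gsum (Finset.univ.filter (· ∈ N))))
    (hX2 : gsum X2 * gsum (X2.image (·⁻¹)) =
      (n * l2) • (1 : MonoidAlgebra ℤ G) +
      l2 • (gsum (Finset.univ.filter (· ∈ G2)) - gsum (Finset.univ.filter (· ∈ N))))
    (hicomm : gsum X1 * gsum (X1.image (·⁻¹)) = gsum (X1.image (·⁻¹)) * gsum X1) :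
    (X1 * X2).card = n ^ 2 * l1 * l2 ∧
      (X1 * X2).card = N.index ∧
      gsum (X1 * X2) * gsum ((X1 * X2).image (·⁻¹)) =
        (n ^ 2 * l1 * l2) • (1 : MonoidAlgebra ℤ G) +
        (n * l1 * l2) • (gsum (Finset.univ : Finset G) - gsum (Finset.univ.filter (· ∈ N))) := by
  classical
  have hNle1 : N ≤ G1 := by rw [hN]; exact inf_le_left
  have hNle2 : N ≤ G2 := by rw [hN]; exact inf_le_right
  have hn0 : 0 < n := hn ▸ Nat.card_pos
  -- coefficient of the RHS of the RDS equations at nontrivial elements of N is 0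
  have hzero1 : ∀ m : G, m ≠ 1 → m ∈ N →
      ((n * l1) • (1 : MonoidAlgebra ℤ G) +
        l1 • (gsum (Finset.univ.filter (· ∈ G1)) - gsum (Finset.univ.filter (· ∈ N)))).coeff m = 0 := by
    intro m hm1 hmN
    have hmG : m ∈ G1 := hNle1 hmN
    simp only [MonoidAlgebra.coeff_add, MonoidAlgebra.coeff_smul, MonoidAlgebra.coeff_sub,
      Finsupp.add_apply, Finsupp.smul_apply, Finsupp.sub_apply,
      gsum_apply, MonoidAlgebra.one_def, MonoidAlgebra.coeff_single, Finsupp.single_apply]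
    simp [hmN, hmG, Ne.symm hm1]
  have hzero2 : ∀ m : G, m ≠ 1 → m ∈ N →
      ((n * l2) • (1 : MonoidAlgebra ℤ G) +
        l2 • (gsum (Finset.univ.filter (· ∈ G2)) - gsum (Finset.univ.filter (· ∈ N)))).coeff m = 0 := by
    intro m hm1 hmN
    have hmG : m ∈ G2 := hNle2 hmN
    simp only [MonoidAlgebra.coeff_add, MonoidAlgebra.coeff_smul, MonoidAlgebra.coeff_sub,
      Finsupp.add_apply, Finsupp.smul_apply, Finsupp.sub_apply,
      gsum_apply, MonoidAlgebra.one_def, MonoidAlgebra.coeff_single, Finsupp.single_apply]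
    simp [hmN, hmG, Ne.symm hm1]
  -- left-quotient property of X1 (uses i-commutativity)
  have hLq : ∀ x ∈ X1, ∀ x' ∈ X1, x⁻¹ * x' ∈ N → x = x' := by
    intro x hx x' hx' hm
    by_contra hne
    have hm1 : x⁻¹ * x' ≠ 1 := fun h => hne ((inv_mul_eq_one.mp h))
    exact no_rep (hicomm.symm.trans hX1) (hzero1 _ hm1 hm)
      (Finset.mem_image_of_mem _ hx) hx' rfl
  -- right-quotient property of X2
  have hRq2 : ∀ y ∈ X2, ∀ y' ∈ X2, y * y'⁻¹ ∈ N → y = y' := by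
    intro y hy y' hy' hm
    by_contra hne
    have hm1 : y * y'⁻¹ ≠ 1 := fun h => hne ((mul_inv_eq_one.mp h))
    exact no_rep hX2 (hzero2 _ hm1 hm) hy (Finset.mem_image_of_mem _ hy') rfl
  -- key injectivity fact
  have hkey : ∀ x ∈ X1, ∀ x' ∈ X1, ∀ b b' : G, b ∈ G2 → b' ∈ G2 →
      x * b = x' * b' → x = x' ∧ b = b' := by
    intro x hx x' hx' b b' hb hb' he
    have h1 : x'⁻¹ * x = b' * b⁻¹ := by
      have := congrArg (fun z => x'⁻¹ * z * b⁻¹) he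
      simpa [mul_assoc] using this
    have hmem : x'⁻¹ * x ∈ N := by
      rw [hN]
      exact ⟨G1.mul_mem (G1.inv_mem (hX1sub x' hx')) (hX1sub x hx),
        h1 ▸ G2.mul_mem hb' (G2.inv_mem hb)⟩
    have hxx : x' = x := hLq x' hx' x hx hmem
    subst hxx
    exact ⟨rfl, mul_left_cancel he⟩
  have hinj1 : ∀ (Y : Finset G), (∀ y ∈ Y, y ∈ G2) →
      ∀ x ∈ X1, ∀ x' ∈ X1, ∀ y ∈ Y, ∀ y' ∈ Y, x * y = x' * y' → x = x' ∧ y = y' :=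
    fun Y hY x hx x' hx' y hy y' hy' he =>
      hkey x hx x' hx' y y' (hY y hy) (hY y' hy') he
  -- cardinalities
  have hcardN : (Finset.univ.filter (· ∈ N)).card = n := by
    rw [← hn, Nat.card_eq_fintype_card]
    exact (Fintype.card_subtype _).symm
  have hcardG1 : (Finset.univ.filter (· ∈ G1)).card = (n * l1) * n := by
    have h1 : Nat.card G1 = Nat.card (G1 ⧸ N.subgroupOf G1) * Nat.card (N.subgroupOf G1) :=
      Subgroup.card_eq_card_quotient_mul_card_subgroup _
    have h2 : Nat.card (N.subgroupOf G1) = n := by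
      rw [← hn]; exact Nat.card_congr (Subgroup.subgroupOfEquivOfLe hNle1).toEquiv
    rw [← hX1semi, h2, hX1card] at h1
    rw [← h1, Nat.card_eq_fintype_card]
    exact (Fintype.card_subtype _).symm
  have hcardG2 : (Finset.univ.filter (· ∈ G2)).card = (n * l2) * n := by
    have h1 : Nat.card G2 = Nat.card (G2 ⧸ N.subgroupOf G2) * Nat.card (N.subgroupOf G2) :=
      Subgroup.card_eq_card_quotient_mul_card_subgroup _
    have h2 : Nat.card (N.subgroupOf G2) = n := by
      rw [← hn]; exact Nat.card_congr (Subgroup.subgroupOfEquivOfLe hNle2).toEquiv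
    rw [← hX2semi, h2, hX2card] at h1
    rw [← h1, Nat.card_eq_fintype_card]
    exact (Fintype.card_subtype _).symm
  -- Set.InjOn converter for card_mul_iff
  have toInjOn : ∀ {X Y : Finset G},
      (∀ x ∈ X, ∀ x' ∈ X, ∀ y ∈ Y, ∀ y' ∈ Y, x * y = x' * y' → x = x' ∧ y = y') →
      Set.InjOn (fun p : G × G => p.1 * p.2) ((X : Set G) ×ˢ (Y : Set G)) := by
    intro X Y h p hp q hq hpq
    exact Prod.ext (h p.1 hp.1 q.1 hq.1 p.2 hp.2 q.2 hq.2 hpq).1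
      (h p.1 hp.1 q.1 hq.1 p.2 hp.2 q.2 hq.2 hpq).2
  -- X1 * N = G1 as finsets
  have hX1N : X1 * Finset.univ.filter (· ∈ N) = Finset.univ.filter (· ∈ G1) := by
    apply Finset.eq_of_subset_of_card_le
    · intro g hg
      obtain ⟨a, ha, b, hb, rfl⟩ := Finset.mem_mul.mp hg
      exact Finset.mem_filter.mpr ⟨Finset.mem_univ _,
        G1.mul_mem (hX1sub a ha) (hNle1 (Finset.mem_filter.mp hb).2)⟩
    · rw [hcardG1,
        Finset.card_mul_iff.mpr (toInjOn
          (hinj1 _ (fun y hy => hNle2 (Finset.mem_filter.mp hy).2))),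
        hX1card, hcardN]
  -- X1 * G2 = G as finsets
  have hX1G2 : X1 * Finset.univ.filter (· ∈ G2) = Finset.univ := by
    apply Finset.eq_univ_of_forall
    intro g
    obtain ⟨a, ha, b, hb, hgeq⟩ := hprod g
    have haf : a ∈ X1 * Finset.univ.filter (· ∈ N) := by
      rw [hX1N]; exact Finset.mem_filter.mpr ⟨Finset.mem_univ _, ha⟩
    obtain ⟨x, hx, m, hm, hxm⟩ := Finset.mem_mul.mp haf
    have hmN : m ∈ N := (Finset.mem_filter.mp hm).2
    have heq : x * (m * b) = g := by rw [← mul_assoc, hxm, ← hgeq]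
    exact heq ▸ Finset.mul_mem_mul hx
      (Finset.mem_filter.mpr ⟨Finset.mem_univ _, G2.mul_mem (hNle2 hmN) hb⟩)
  -- G2 * X1⁻¹ = G as finsets
  have hG2X1i : (Finset.univ.filter (· ∈ G2)) * X1.image (·⁻¹) = Finset.univ := by
    apply Finset.eq_univ_of_forall
    intro g
    obtain ⟨a, ha, b, hb, hgeq⟩ := hprod g⁻¹
    have haf : a ∈ X1 * Finset.univ.filter (· ∈ N) := by
      rw [hX1N]; exact Finset.mem_filter.mpr ⟨Finset.mem_univ _, ha⟩
    obtain ⟨x, hx, m, hm, hxm⟩ := Finset.mem_mul.mp haf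
    have hmN : m ∈ N := (Finset.mem_filter.mp hm).2
    have heq : (b⁻¹ * m⁻¹) * x⁻¹ = g := by
      rw [mul_assoc, ← mul_inv_rev, hxm, ← mul_inv_rev, ← hgeq, inv_inv]
    exact heq ▸ Finset.mul_mem_mul
      (Finset.mem_filter.mpr ⟨Finset.mem_univ _, G2.mul_mem (G2.inv_mem hb) (G2.inv_mem (hNle2 hmN))⟩)
      (Finset.mem_image_of_mem _ hx)
  -- injectivity for G2 × X1⁻¹
  have hinj5 : ∀ b ∈ Finset.univ.filter (· ∈ G2), ∀ b' ∈ Finset.univ.filter (· ∈ G2),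
      ∀ u ∈ X1.image (·⁻¹), ∀ u' ∈ X1.image (·⁻¹), b * u = b' * u' → b = b' ∧ u = u' := by
    intro b hb b' hb' u hu u' hu' he
    obtain ⟨x, hx, rfl⟩ := Finset.mem_image.mp hu
    obtain ⟨x', hx', rfl⟩ := Finset.mem_image.mp hu'
    have hbG : b ∈ G2 := (Finset.mem_filter.mp hb).2
    have hbG' : b' ∈ G2 := (Finset.mem_filter.mp hb').2
    have h1 : b'⁻¹ * b = x'⁻¹ * x := by
      have := congrArg (fun z => b'⁻¹ * z * x) he
      simpa [mul_assoc] using this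
    have hmem : x'⁻¹ * x ∈ N := by
      rw [hN]
      exact ⟨G1.mul_mem (G1.inv_mem (hX1sub x' hx')) (hX1sub x hx),
        h1 ▸ G2.mul_mem (G2.inv_mem hbG') hbG⟩
    have hxx : x' = x := hLq x' hx' x hx hmem
    subst hxx
    have hb1 : b'⁻¹ * b = 1 := by rw [h1]; exact inv_mul_cancel _
    exact ⟨(inv_mul_eq_one.mp hb1).symm, rfl⟩
  -- injectivity for X2⁻¹ × X1⁻¹
  have hinjBA : ∀ u ∈ X2.image (·⁻¹), ∀ u' ∈ X2.image (·⁻¹),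
      ∀ v ∈ X1.image (·⁻¹), ∀ v' ∈ X1.image (·⁻¹), u * v = u' * v' → u = u' ∧ v = v' := by
    intro u hu u' hu' v hv v' hv' he
    obtain ⟨y, hy, rfl⟩ := Finset.mem_image.mp hu
    obtain ⟨y', hy', rfl⟩ := Finset.mem_image.mp hu'
    obtain ⟨x, hx, rfl⟩ := Finset.mem_image.mp hv
    obtain ⟨x', hx', rfl⟩ := Finset.mem_image.mp hv'
    have he2 : x * y = x' * y' := by
      have := congrArg (fun z => z⁻¹) he
      simpa [mul_inv_rev] using this
    obtain ⟨h1, h2⟩ := hkey x hx x' hx' y y' (hX2sub y hy) (hX2sub y' hy') he2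
    exact ⟨by rw [h2], by rw [h1]⟩
  -- gsum identities
  have hF1 : gsum (X1 * X2) = gsum X1 * gsum X2 :=
    (gsum_of_image_eq _ (hinj1 X2 hX2sub) rfl).symm
  have hF2 : gsum ((X1 * X2).image (·⁻¹)) = gsum (X2.image (·⁻¹)) * gsum (X1.image (·⁻¹)) := by
    have him : (X1 * X2).image (·⁻¹) = (X2.image (·⁻¹)) * (X1.image (·⁻¹)) := by
      rw [Finset.image_inv_eq_inv, Finset.image_inv_eq_inv, Finset.image_inv_eq_inv, mul_inv_rev]
    rw [him]
    exact (gsum_of_image_eq _ hinjBA rfl).symm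
  have hF3 : gsum X1 * gsum (Finset.univ.filter (· ∈ N)) = gsum (Finset.univ.filter (· ∈ G1)) :=
    gsum_of_image_eq _ (hinj1 _ (fun y hy => hNle2 (Finset.mem_filter.mp hy).2)) hX1N
  have hF4 : gsum X1 * gsum (Finset.univ.filter (· ∈ G2)) = gsum (Finset.univ : Finset G) :=
    gsum_of_image_eq _ (hinj1 _ (fun y hy => (Finset.mem_filter.mp hy).2)) hX1G2
  have hF5 : gsum (Finset.univ.filter (· ∈ G2)) * gsum (X1.image (·⁻¹))
      = gsum (Finset.univ : Finset G) :=
    gsum_of_image_eq _ hinj5 hG2X1i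
  have hcardim : (X1.image (·⁻¹)).card = n * l1 := by
    rw [Finset.card_image_of_injective _ inv_injective, hX1card]
  -- key products
  have hkey1 : gsum X1 * gsum (Finset.univ.filter (· ∈ G2)) * gsum (X1.image (·⁻¹))
      = (n * l1) • gsum (Finset.univ : Finset G) := by
    rw [hF4, gsum_univ_mul, hcardim]
  have hkey2 : gsum X1 * gsum (Finset.univ.filter (· ∈ N)) * gsum (X1.image (·⁻¹))
      = (n * l1) • gsum (Finset.univ.filter (· ∈ G1)) := by
    rw [hF3, gsum_filter_mul G1 (fun a ha => by
      obtain ⟨x, hx, rfl⟩ := Finset.mem_image.mp ha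
      exact G1.inv_mem (hX1sub x hx)), hcardim]
  -- goal 1
  have hcard12 : (X1 * X2).card = n ^ 2 * l1 * l2 := by
    rw [Finset.card_mul_iff.mpr (toInjOn (hinj1 X2 hX2sub)), hX1card, hX2card]
    ring
  refine ⟨hcard12, ?_, ?_⟩
  · -- goal 2
    have hGcard : Fintype.card G = (n * l1) * ((n * l2) * n) := by
      rw [← Finset.card_univ, ← hX1G2,
        Finset.card_mul_iff.mpr (toInjOn (hinj1 _ (fun y hy => (Finset.mem_filter.mp hy).2))),
        hX1card, hcardG2]
    have hidx : N.index * n = (n ^ 2 * l1 * l2) * n := by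
      rw [← hn]
      rw [Subgroup.index_mul_card N, hn, Nat.card_eq_fintype_card, hGcard]
      ring
    rw [hcard12]
    exact (Nat.eq_of_mul_eq_mul_right hn0 hidx).symm
  · -- goal 3
    rw [hF1, hF2]
    rw [show gsum X1 * gsum X2 * (gsum (X2.image (·⁻¹)) * gsum (X1.image (·⁻¹)))
        = gsum X1 * (gsum X2 * gsum (X2.image (·⁻¹))) * gsum (X1.image (·⁻¹)) from by
      rw [← mul_assoc, mul_assoc (gsum X1) (gsum X2)]]
    rw [hX2]
    simp only [mul_add, add_mul, mul_sub, sub_mul, mul_smul_comm, smul_mul_assoc, mul_one]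
    rw [hX1, hkey1, hkey2]
    module
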